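/- Let T(λ) = -B_0 + λI + B_1/(λ - α_1) + ... + B_m/(λ - α_m) where B_i are n×n complex matrices, α_i are distinct complex numbers, and let C_T be the (m+1)n × (m+1)n block companion-type matrix with diagonal blocks α_1 I, ..., α_m I in the first m positions, last column blocks -I (first m rows) and B_0 (last row is B_1, ..., B_m, B_0). If λ_0 is an eigenvalue of T(λ) (so λ_0 ≠ α_i for all i and T(λ_0)v = 0 for some v ≠ 0), then λ_0 is an eigenvalue of C_T. -/

import Mathlib

/-- The `(m+1)n × (m+1)n` block companion-type matrix
`C_T = [[α₁I, 0, …, 0, -I], [0, α₂I, …, 0, -I], …, [0, …, αₘI, -I], [B₁, …, Bₘ, B₀]]`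
associated with `T(λ) = -B₀ + λI + Σ Bᵢ/(λ - αᵢ)`. -/
def blockCT (m n : ℕ) (B0 : Matrix (Fin n) (Fin n) ℂ) (B : Fin m → Matrix (Fin n) (Fin n) ℂ)
    (α : Fin m → ℂ) :
    Matrix ((Fin m × Fin n) ⊕ Fin n) ((Fin m × Fin n) ⊕ Fin n) ℂ
  | Sum.inl (i, r), Sum.inl (j, s) => if i = j ∧ r = s then α i else 0
  | Sum.inl (_, r), Sum.inr s => -(if r = s then 1 else 0)
  | Sum.inr r, Sum.inl (j, s) => B j r s
  | Sum.inr r, Sum.inr s => B0 r s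

/-- If `λ₀` is an eigenvalue of the matrix rational function
`T(λ) = -B₀ + λI + Σ Bᵢ/(λ - αᵢ)` (so `λ₀ ≠ αᵢ` for all `i` and `T(λ₀)v = 0` for some
`v ≠ 0`), then `λ₀` is an eigenvalue of the block matrix `C_T`. -/
theorem stmt_7 (m n : ℕ) (B0 : Matrix (Fin n) (Fin n) ℂ)
    (B : Fin m → Matrix (Fin n) (Fin n) ℂ)
    (α : Fin m → ℂ) (hα : Function.Injective α)
    (lam0 : ℂ) (hpole : ∀ i, lam0 ≠ α i) (v : Fin n → ℂ) (hv : v ≠ 0)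
    (heig : (-B0 + lam0 • (1 : Matrix (Fin n) (Fin n) ℂ) +
        ∑ i, (lam0 - α i)⁻¹ • B i).mulVec v = 0) :
    ∃ w : (Fin m × Fin n) ⊕ Fin n → ℂ, w ≠ 0 ∧
      (blockCT m n B0 B α).mulVec w = lam0 • w := by
  have heig' : -(B0.mulVec v) + lam0 • v
      + ∑ i, (lam0 - α i)⁻¹ • (B i).mulVec v = 0 := by
    rw [← heig]
    have hsum : (∑ i : Fin m, (lam0 - α i)⁻¹ • B i).mulVec v
        = ∑ i : Fin m, (lam0 - α i)⁻¹ • (B i).mulVec v := by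
      ext r
      simp only [Matrix.mulVec, dotProduct, Matrix.sum_apply, Matrix.smul_apply,
        Finset.sum_apply, Pi.smul_apply, smul_eq_mul, Finset.sum_mul, Finset.mul_sum]
      rw [Finset.sum_comm]
      exact Finset.sum_congr rfl fun j _ => Finset.sum_congr rfl fun s _ => by ring
    simp [Matrix.add_mulVec, Matrix.neg_mulVec, Matrix.smul_mulVec,
      Matrix.one_mulVec, hsum]
  refine ⟨Sum.elim (fun p => -((lam0 - α p.1)⁻¹ * v p.2)) v, ?_, ?_⟩
  · intro h
    apply hv
    funext r
    have := congrFun h (Sum.inr r)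
    simpa using this
  · funext x
    cases x with
    | inl p =>
      obtain ⟨i, r⟩ := p
      have hne : lam0 - α i ≠ 0 := sub_ne_zero.mpr (hpole i)
      simp only [Matrix.mulVec, dotProduct, Fintype.sum_sum_type,
        Fintype.sum_prod_type, blockCT, Sum.elim_inl, Sum.elim_inr, Pi.smul_apply,
        smul_eq_mul]
      rw [Finset.sum_eq_single i]
      · rw [Finset.sum_eq_single r]
        · simp only [and_self, if_true, if_pos rfl]
          field_simp
          simp only [ite_mul, one_mul, zero_mul, Finset.sum_neg_distrib, Finset.sum_ite_eq,
            Finset.mem_univ, if_true]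
          ring
        · intro s _ hs
          simp [Ne.symm hs, hs]
        · simp
      · intro j _ hj
        apply Finset.sum_eq_zero
        intro s _
        simp [Ne.symm hj, hj]
      · simp
    | inr r =>
      simp only [Matrix.mulVec, dotProduct, Fintype.sum_sum_type,
        Fintype.sum_prod_type, blockCT, Sum.elim_inl, Sum.elim_inr, Pi.smul_apply,
        smul_eq_mul]
      have hX : ∀ j : Fin m, ∑ s : Fin n, B j r s * -((lam0 - α j)⁻¹ * v s)
          = -((lam0 - α j)⁻¹ * (B j).mulVec v r) := by
        intro j
        simp only [Matrix.mulVec, dotProduct]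
        rw [Finset.mul_sum, ← Finset.sum_neg_distrib]
        exact Finset.sum_congr rfl fun s _ => by ring
      rw [Finset.sum_congr rfl fun j _ => hX j, Finset.sum_neg_distrib]
      have hr := congrFun heig' r
      simp only [Pi.add_apply, Pi.neg_apply, Pi.smul_apply, Finset.sum_apply,
        Pi.zero_apply, smul_eq_mul] at hr
      have hB0 : ∑ s : Fin n, B0 r s * v s = B0.mulVec v r := rfl
      rw [hB0]
      linear_combination (-1 : ℂ) * hr
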